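/- Let w' be the infinite word over {1,2,3} from the Cassaigne example (image under Θ(i) = 1^i 2 1^i 3 1^i of the ruler sequence). Then the palindromic factors of w' of even length are exactly the words 1^n (n even), and the palindromic factors of odd length n are exactly 1^n, 1^{(n−1)/2} 2 1^{(n−1)/2}, and 1^{(n−1)/2} 3 1^{(n−1)/2}. Hence the palindrome complexity of w' is p(n) = 1 for n even and p(n) = 3 for n odd. -/

import Mathlib

/-- The ruler sequence w = 1,2,1,3,1,2,1,4,…, the fixed point of the substitution
i ↦ i (i+1) starting from 1: w_m = ν₂(m+1) + 1 (0-indexed). -/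
def ruler (m : ℕ) : ℕ := padicValNat 2 (m + 1) + 1

/-- The morphism Θ(i) = 1^i 2 1^i 3 1^i. -/
def theta (i : ℕ) : List ℕ :=
  List.replicate i 1 ++ [2] ++ List.replicate i 1 ++ [3] ++ List.replicate i 1

/-- `u` is a factor of w' = Θ(w), the Cassaigne example. -/
def FactorW' (u : List ℕ) : Prop :=
  ∃ m, u <:+: ((List.range m).map ruler).flatMap theta

namespace CP

abbrev one (n : ℕ) : List ℕ := List.replicate n 1

def W (m : ℕ) : List ℕ := ((List.range m).map ruler).flatMap theta

lemma factorW'_iff (u : List ℕ) : FactorW' u ↔ ∃ m, u <:+: W m := Iff.rfl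

lemma ruler_pos (m : ℕ) : 1 ≤ ruler m := Nat.le_add_left 1 _

lemma W_succ (m : ℕ) : W (m + 1) = W m ++ theta (ruler m) := by
  simp [W, List.range_succ]

lemma mem_W {x : ℕ} {m : ℕ} (h : x ∈ W m) : x = 1 ∨ x = 2 ∨ x = 3 := by
  simp only [W, List.mem_flatMap] at h
  obtain ⟨i, -, hx⟩ := h
  simp [theta, List.mem_append, List.mem_replicate] at hx
  tauto

def pre : ℕ → ℕ
  | 0 => ruler 0
  | (k + 1) => ruler k + ruler (k + 1)

def blockL (k : ℕ) : List (ℕ × ℕ) := [(2, pre k), (3, ruler k)]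

def L (m : ℕ) : List (ℕ × ℕ) := (List.range m).flatMap blockL

def NF (l : List (ℕ × ℕ)) : List ℕ := l.flatMap fun p => List.replicate p.2 1 ++ [p.1]

def post : ℕ → ℕ
  | 0 => 0
  | (m + 1) => ruler m

lemma NF_cons (p : ℕ × ℕ) (l : List (ℕ × ℕ)) :
    NF (p :: l) = one p.2 ++ p.1 :: NF l := by
  simp [NF, one]

lemma NF_append (l₁ l₂ : List (ℕ × ℕ)) : NF (l₁ ++ l₂) = NF l₁ ++ NF l₂ :=
  List.flatMap_append

lemma W_eq (m : ℕ) : W m = NF (L m) ++ one (post m) := by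
  induction m with
  | zero => simp [W, L, NF, post, one]
  | succ m ih =>
    have hL : L (m + 1) = L m ++ blockL m := by simp [L, List.range_succ]
    rw [W_succ, ih, hL, NF_append]
    have hblock : NF (blockL m) = one (pre m) ++ 2 :: (one (ruler m) ++ [3]) := by
      simp [blockL, NF, one]
    rw [hblock]
    have hpre : one (post m) ++ one (ruler m) = one (pre m) := by
      cases m <;> simp [post, pre, one, ← List.replicate_add]
    rw [← hpre]
    simp [theta, one, post]
    rw [List.replicate_add, List.append_assoc]

lemma mem_L {p : ℕ × ℕ} {m : ℕ} (h : p ∈ L m) : p.1 = 2 ∨ p.1 = 3 := by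
  simp only [L, List.mem_flatMap] at h
  obtain ⟨k, -, hp⟩ := h
  simp [blockL] at hp
  rcases hp with rfl | rfl <;> simp

lemma L_length (m : ℕ) : (L m).length = 2 * m := by
  induction m with
  | zero => simp [L]
  | succ m ih => simp [L, List.range_succ, blockL] at ih ⊢; omega

lemma L_get (m k : ℕ) (h : k < m) :
    (L m)[2 * k]? = some (2, pre k) ∧ (L m)[2 * k + 1]? = some (3, ruler k) := by
  induction m with
  | zero => omega
  | succ m ih =>
    have hL : L (m + 1) = L m ++ blockL m := by simp [L, List.range_succ]
    rcases Nat.lt_or_ge k m with hk | hk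
    · have h1 : 2 * k + 1 < (L m).length := by rw [L_length]; omega
      rw [hL]
      rw [List.getElem?_append_left (by omega), List.getElem?_append_left h1]
      exact ih hk
    · have hk' : k = m := by omega
      subst hk'
      rw [hL]
      rw [List.getElem?_append_right (by rw [L_length]),
          List.getElem?_append_right (by rw [L_length]; omega)]
      simp [L_length, blockL]
lemma infix_drop_left {u v : List ℕ} {c y : ℕ} (hy : y ≠ 1)
    (h : y :: u <:+: one c ++ v) : y :: u <:+: v := by
  induction c with
  | zero => simpa using h
  | succ c ih =>
    apply ih
    rw [one, List.replicate_succ, List.cons_append] at h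
    rcases List.infix_cons_iff.1 h with hp | hi
    · exact absurd (List.cons_prefix_cons.1 hp).1 hy
    · exact hi

lemma infix_drop_right {u v : List ℕ} {c y : ℕ} (hy : y ≠ 1)
    (h : u ++ [y] <:+: v ++ one c) : u ++ [y] <:+: v := by
  rw [← List.reverse_infix] at h ⊢
  simp only [List.reverse_append, List.reverse_cons, one, List.reverse_replicate] at h ⊢
  exact infix_drop_left hy (by simpa using h)

lemma prefix_ones : ∀ {a g z x : ℕ} {w v : List ℕ}, z ≠ 1 → x ≠ 1 →
    (one a ++ z :: w <+: one g ++ x :: v) → a = g ∧ z = x ∧ w <+: v := by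
  intro a
  induction a with
  | zero =>
    intro g z x w v hz hx h
    cases g with
    | zero =>
      simp only [one, List.replicate_zero, List.nil_append] at h
      obtain ⟨rfl, hw⟩ := List.cons_prefix_cons.1 h
      exact ⟨rfl, rfl, hw⟩
    | succ g =>
      simp only [one, List.replicate_zero, List.nil_append, List.replicate_succ,
        List.cons_append] at h
      exact absurd (List.cons_prefix_cons.1 h).1 hz
  | succ a ih =>
    intro g z x w v hz hx h
    cases g with
    | zero =>
      simp only [one, List.replicate_succ, List.replicate_zero, List.cons_append,
        List.nil_append] at h
      exact absurd (List.cons_prefix_cons.1 h).1.symm hx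
    | succ g =>
      simp only [one, List.replicate_succ, List.cons_append] at h
      obtain ⟨-, hw⟩ := List.cons_prefix_cons.1 h
      obtain ⟨h1, h2, h3⟩ := ih hz hx hw
      exact ⟨by omega, h2, h3⟩

lemma parse : ∀ (l : List (ℕ × ℕ)) {y : ℕ} {u : List ℕ}, y ≠ 1 →
    y :: u <:+: NF l → ∃ l₁ g l₂, l = l₁ ++ (y, g) :: l₂ ∧ u <+: NF l₂ := by
  intro l
  induction l with
  | nil =>
    intro y u hy h
    have := h.sublist.length_le
    simp [NF] at this
  | cons p t ih =>
    intro y u hy h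
    rw [NF_cons] at h
    have h' := infix_drop_left hy h
    rcases List.infix_cons_iff.1 h' with hp | hi
    · obtain ⟨rfl, hu⟩ := List.cons_prefix_cons.1 hp
      exact ⟨[], p.2, t, by simp, hu⟩
    · obtain ⟨l₁, g, l₂, rfl, hu⟩ := ih hy hi
      exact ⟨p :: l₁, g, l₂, rfl, hu⟩

lemma parse_prefix {l : List (ℕ × ℕ)} {z a : ℕ} {u : List ℕ}
    (hl : ∀ p ∈ l, p.1 ≠ 1) (hz : z ≠ 1)
    (h : one a ++ z :: u <+: NF l) : ∃ t, l = (z, a) :: t ∧ u <+: NF t := by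
  cases l with
  | nil =>
    have := h.length_le
    simp [NF, one] at this
  | cons q t =>
    rw [NF_cons] at h
    obtain ⟨h1, h2, h3⟩ := prefix_ones hz (hl q (by simp)) h
    exact ⟨t, by rw [h1, h2], h3⟩

lemma parse_pair {l : List (ℕ × ℕ)} {y z a : ℕ} {u : List ℕ}
    (hl : ∀ p ∈ l, p.1 ≠ 1) (hy : y ≠ 1) (hz : z ≠ 1)
    (h : y :: (one a ++ z :: u) <:+: NF l) :
    ∃ l₁ g l₂, l = l₁ ++ (y, g) :: (z, a) :: l₂ ∧ u <+: NF l₂ := by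
  obtain ⟨l₁, g, l₂, rfl, hu⟩ := parse l hy h
  obtain ⟨t, rfl, hu'⟩ := parse_prefix (fun p hp => hl p (by simp [hp])) hz hu
  exact ⟨l₁, g, t, rfl, hu'⟩

lemma parse_triple {l : List (ℕ × ℕ)} {y z y' a b : ℕ}
    (hl : ∀ p ∈ l, p.1 ≠ 1) (hy : y ≠ 1) (hz : z ≠ 1) (hy' : y' ≠ 1)
    (h : y :: (one a ++ z :: (one b ++ [y'])) <:+: NF l) :
    ∃ l₁ g l₂, l = l₁ ++ (y, g) :: (z, a) :: (y', b) :: l₂ := by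
  obtain ⟨l₁, g, l₂, rfl, hu⟩ := parse_pair hl hy hz h
  have hu2 : one b ++ y' :: [] <+: NF l₂ := by simpa using hu
  obtain ⟨t, rfl, -⟩ := parse_prefix (fun p hp => hl p (by simp [hp])) hy' hu2
  exact ⟨l₁, g, t, rfl⟩
lemma getElem_of_decomp {α : Type*} (l₁ : List α) (p : α) (l₂ : List α) :
    (l₁ ++ p :: l₂)[l₁.length]? = some p := by
  rw [List.getElem?_append_right (le_refl _)]
  simp

lemma L_decomp2 {m : ℕ} {l₁ l₂ : List (ℕ × ℕ)} {p q : ℕ × ℕ}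
    (h : L m = l₁ ++ p :: q :: l₂) :
    ∃ k, (l₁.length = 2 * k ∧ p = (2, pre k) ∧ q = (3, ruler k) ∧ k < m) ∨
         (l₁.length = 2 * k + 1 ∧ p = (3, ruler k) ∧ q = (2, pre (k + 1)) ∧ k + 1 < m) := by
  have hlen : l₁.length + 2 + l₂.length = 2 * m := by
    have := congrArg List.length h
    simp [L_length] at this
    omega
  have hp : (L m)[l₁.length]? = some p := by rw [h]; exact getElem_of_decomp _ _ _
  have hq : (L m)[l₁.length + 1]? = some q := by
    rw [h, show l₁ ++ p :: q :: l₂ = (l₁ ++ [p]) ++ q :: l₂ by simp,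
      show l₁.length + 1 = (l₁ ++ [p]).length by simp]
    exact getElem_of_decomp _ _ _
  rcases Nat.even_or_odd l₁.length with ⟨k, hk⟩ | ⟨k, hk⟩
  · have hkm : k < m := by omega
    obtain ⟨h2, h3⟩ := L_get m k hkm
    rw [show l₁.length = 2 * k by omega] at hp hq
    rw [hp] at h2
    rw [hq] at h3
    exact ⟨k, Or.inl ⟨by omega, (Option.some_inj.1 h2), (Option.some_inj.1 h3), hkm⟩⟩
  · have hkm : k + 1 < m := by omega
    obtain ⟨h2, -⟩ := L_get m (k + 1) hkm
    obtain ⟨-, h3⟩ := L_get m k (by omega)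
    rw [show l₁.length = 2 * k + 1 by omega] at hp
    rw [show l₁.length + 1 = 2 * (k + 1) by omega] at hq
    rw [hp] at h3
    rw [hq] at h2
    exact ⟨k, Or.inr ⟨by omega, (Option.some_inj.1 h3), (Option.some_inj.1 h2), hkm⟩⟩

lemma hl_L (m : ℕ) : ∀ p ∈ L m, p.1 ≠ 1 := by
  intro p hp
  rcases mem_L hp with h | h <;> omega

lemma no_pal_pair {m y c : ℕ} (hy : y ≠ 1)
    (h : y :: (one c ++ [y]) <:+: W m) : False := by
  rw [W_eq] at h
  have h' : y :: (one c ++ [y]) <:+: NF (L m) := by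
    have heq : y :: (one c ++ [y]) = (y :: one c) ++ [y] := by simp
    rw [heq] at h ⊢
    exact infix_drop_right hy h
  obtain ⟨l₁, g, l₂, hL, -⟩ := parse_pair (hl_L m) hy hy h'
  obtain ⟨k, hcase⟩ := L_decomp2 hL
  rcases hcase with ⟨-, hp, hq, -⟩ | ⟨-, hp, hq, -⟩ <;>
    · have h1 := congrArg Prod.fst hp
      have h2 := congrArg Prod.fst hq
      simp at h1 h2
      omega

lemma no_pal_triple {m y z a : ℕ} (hy : y ≠ 1) (hz : z ≠ 1)
    (h : y :: (one a ++ z :: (one a ++ [y])) <:+: W m) : False := by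
  rw [W_eq] at h
  have h' : y :: (one a ++ z :: (one a ++ [y])) <:+: NF (L m) := by
    have heq : y :: (one a ++ z :: (one a ++ [y]))
        = (y :: (one a ++ z :: one a)) ++ [y] := by simp
    rw [heq] at h ⊢
    exact infix_drop_right hy h
  obtain ⟨l₁, g, l₂, hL⟩ := parse_triple (hl_L m) hy hz hy h'
  obtain ⟨k, hcase⟩ := L_decomp2 hL
  have hL' : L m = (l₁ ++ [(y, g)]) ++ (z, a) :: (y, a) :: l₂ := by simpa using hL
  obtain ⟨k', hcase'⟩ := L_decomp2 hL'
  have hlen' : (l₁ ++ [(y, g)]).length = l₁.length + 1 := by simp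
  have r1 := ruler_pos k
  have r2 := ruler_pos (k + 1)
  have r1' := ruler_pos k'
  have r2' := ruler_pos (k' + 1)
  rcases hcase with ⟨e1, hp, hq, -⟩ | ⟨e1, hp, hq, -⟩ <;>
      rcases hcase' with ⟨e2, hp', hq', -⟩ | ⟨e2, hp', hq', -⟩
  · omega
  ·
    have hk : k' = k := by omega
    subst hk
    injection hq with hz3 h1
    injection hq' with hy2 h2
    simp [pre] at h2
    omega
  ·
    have hk : k' = k + 1 := by omega
    subst hk
    injection hq with hz2 h1
    injection hq' with hy3 h2
    simp [pre] at h1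
    omega
  · omega
lemma decomp_ones : ∀ (u : List ℕ), (∃ x ∈ u, x ≠ 1) →
    ∃ a y rest, y ≠ 1 ∧ u = one a ++ y :: rest := by
  intro u
  induction u with
  | nil => simp
  | cons x t ih =>
    intro h
    by_cases hx : x = 1
    · subst hx
      obtain ⟨x', hx', hne⟩ := h
      rcases List.mem_cons.1 hx' with rfl | hx't
      · exact absurd rfl hne
      · obtain ⟨a, y, rest, hy, ht⟩ := ih ⟨x', hx't, hne⟩
        exact ⟨a + 1, y, rest, hy, by
          simp only [one, List.replicate_succ, List.cons_append, ht]⟩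
    · exact ⟨0, x, t, hx, by simp [one]⟩

lemma pal_struct_aux : ∀ (n : ℕ) (u : List ℕ), u.length ≤ n → u.reverse = u →
    (∃ c, u = one c) ∨
    (∃ a y, y ≠ 1 ∧ u = one a ++ y :: one a) ∨
    (∃ y z c, y ≠ 1 ∧ z ≠ 1 ∧
      (y :: (one c ++ [y]) <:+: u ∨ y :: (one c ++ z :: (one c ++ [y])) <:+: u)) := by
  intro n
  induction n with
  | zero =>
    intro u hlen _
    have : u = [] := by cases u with | nil => rfl | cons x t => simp at hlen
    exact Or.inl ⟨0, by simp [one, this]⟩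
  | succ n ih =>
    intro u hlen hpal
    by_cases hall : ∀ x ∈ u, x = 1
    · exact Or.inl ⟨u.length, List.eq_replicate_iff.2 ⟨rfl, hall⟩⟩
    · push_neg at hall
      obtain ⟨a, y, rest, hy, hu⟩ := decomp_ones u hall
      have hrev : u = rest.reverse ++ y :: one a := by
        conv_lhs => rw [← hpal, hu]
        simp [one]
      by_cases hrest : ∀ x ∈ rest, x = 1
      · have hr : rest = one rest.length := List.eq_replicate_iff.2 ⟨rfl, hrest⟩
        have hrr : rest.reverse = one rest.length := by
          conv_lhs => rw [hr, one, List.reverse_replicate]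
        have hpref : one a ++ y :: rest <+: one rest.length ++ y :: one a := by
          rw [← hu, ← hrr, ← hrev]
        obtain ⟨hac, -, -⟩ := prefix_ones hy hy hpref
        refine Or.inr (Or.inl ⟨a, y, hy, ?_⟩)
        rw [hu, hr, hac]
      · push_neg at hrest
        have hlrest : a + 1 ≤ rest.length := by
          by_contra hcon
          push_neg at hcon
          have h1 : rest.reverse <+: u := ⟨y :: one a, hrev.symm⟩
          have h2 : one a <+: u := by
            rw [hu]; exact List.prefix_append _ _
          have h3 : rest.reverse <+: one a :=
            List.prefix_of_prefix_length_le h1 h2 (by simp; omega)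
          obtain ⟨x, hx, hxne⟩ := hrest
          have : x ∈ one a := h3.subset (by simp [hx])
          exact hxne (List.eq_of_mem_replicate this)
        have h4 : one a ++ [y] <+: u := by
          rw [hu, show one a ++ y :: rest = (one a ++ [y]) ++ rest by simp]
          exact List.prefix_append _ _
        have h5 : rest.reverse <+: u := ⟨y :: one a, hrev.symm⟩
        have h6 : one a ++ [y] <+: rest.reverse :=
          List.prefix_of_prefix_length_le h4 h5 (by simp; omega)
        obtain ⟨core, hcore⟩ := h6
        have hrest2 : rest = core.reverse ++ y :: one a := by
          have := congrArg List.reverse hcore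
          simpa [one] using this.symm
        have hu2 : u = one a ++ y :: (core.reverse ++ y :: one a) := by rw [hu, hrest2]
        have hdpal : core.reverse.reverse = core.reverse := by
          have h7 : u.reverse = one a ++ y :: (core.reverse.reverse ++ y :: one a) := by
            conv_lhs => rw [hu2]
            simp [one]
          rw [hpal, hu2] at h7
          have h8 := List.append_cancel_left h7
          injection h8 with _ h9
          exact (List.append_cancel_right h9).symm
        have hdinfix : core.reverse <:+: u :=
          ⟨one a ++ [y], y :: one a, by rw [hu2]; simp⟩
        have hdlen : core.reverse.length ≤ n := by
          have h10 := congrArg List.length hu2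
          simp [one] at h10
          rw [List.length_reverse]
          omega
        rcases ih core.reverse hdlen hdpal with ⟨c, hdone⟩ | ⟨b, z, hz, hdone⟩ |
            ⟨y', z', c, hy', hz', hinf⟩
        · refine Or.inr (Or.inr ⟨y, 2, c, hy, by omega, Or.inl ?_⟩)
          exact ⟨one a, one a, by rw [hu2, hdone]; simp⟩
        · refine Or.inr (Or.inr ⟨y, z, b, hy, hz, Or.inr ?_⟩)
          exact ⟨one a, one a, by rw [hu2, hdone]; simp⟩
        · exact Or.inr (Or.inr ⟨y', z', c, hy', hz',
            hinf.imp (fun h => h.trans hdinfix) (fun h => h.trans hdinfix)⟩)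

lemma pal_struct (u : List ℕ) (hpal : u.reverse = u) :
    (∃ c, u = one c) ∨
    (∃ a y, y ≠ 1 ∧ u = one a ++ y :: one a) ∨
    (∃ y z c, y ≠ 1 ∧ z ≠ 1 ∧
      (y :: (one c ++ [y]) <:+: u ∨ y :: (one c ++ z :: (one c ++ [y])) <:+: u)) :=
  pal_struct_aux u.length u (le_refl _) hpal
lemma theta_infix_W (m : ℕ) : theta (ruler m) <:+: W (m + 1) := by
  rw [W_succ]; exact (List.suffix_append _ _).isInfix

lemma exists_ruler_ge (n : ℕ) : ∃ m, n ≤ ruler m := by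
  refine ⟨2 ^ n - 1, ?_⟩
  have h1 : 1 ≤ 2 ^ n := Nat.one_le_two_pow
  have h2 : (2 : ℕ) ^ n - 1 + 1 = 2 ^ n := by omega
  rw [ruler, h2, padicValNat.prime_pow]
  omega

lemma merge (x y : ℕ) (X : List ℕ) : one x ++ (one y ++ X) = one (x + y) ++ X := by
  rw [← List.append_assoc, one, one, one, ← List.replicate_add]

lemma merge2 (x y : ℕ) : one x ++ one y = one (x + y) := by
  rw [one, one, one, ← List.replicate_add]

lemma factor_ones (n : ℕ) : FactorW' (one n) := by
  obtain ⟨m, hm⟩ := exists_ruler_ge n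
  obtain ⟨b, hb⟩ := Nat.le.dest hm
  refine ⟨m + 1, List.IsInfix.trans ?_ (theta_infix_W m)⟩
  refine ⟨[], one b ++ 2 :: one (ruler m) ++ 3 :: one (ruler m), ?_⟩
  simp only [theta, List.nil_append, List.append_assoc, List.cons_append,
    List.singleton_append]
  rw [merge, hb]

lemma factor_two (a : ℕ) : FactorW' (one a ++ 2 :: one a) := by
  obtain ⟨m, hm⟩ := exists_ruler_ge a
  obtain ⟨b, hb⟩ := Nat.le.dest hm
  refine ⟨m + 1, List.IsInfix.trans ?_ (theta_infix_W m)⟩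
  refine ⟨one b, one b ++ 3 :: one (ruler m), ?_⟩
  simp only [theta, List.append_assoc, List.cons_append, List.singleton_append,
    List.nil_append]
  simp only [merge, merge2]
  rw [Nat.add_comm b a, hb]

lemma factor_three (a : ℕ) : FactorW' (one a ++ 3 :: one a) := by
  obtain ⟨m, hm⟩ := exists_ruler_ge a
  obtain ⟨b, hb⟩ := Nat.le.dest hm
  refine ⟨m + 1, List.IsInfix.trans ?_ (theta_infix_W m)⟩
  refine ⟨one (ruler m) ++ 2 :: one b, one b, ?_⟩
  simp only [theta, List.append_assoc, List.cons_append, List.singleton_append,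
    List.nil_append]
  simp only [merge, merge2]
  rw [Nat.add_comm b a, hb]

lemma pal_mid (x a : ℕ) : (one a ++ x :: one a).reverse = one a ++ x :: one a := by
  simp [one]

lemma main_iff (u : List ℕ) : (FactorW' u ∧ u.reverse = u) ↔
    ((∃ n, u = List.replicate n 1) ∨
      (∃ m, u = List.replicate m 1 ++ 2 :: List.replicate m 1) ∨
      (∃ m, u = List.replicate m 1 ++ 3 :: List.replicate m 1)) := by
  constructor
  · rintro ⟨⟨m, hinf⟩, hpal⟩
    have hinf' : u <:+: W m := hinf
    rcases pal_struct u hpal with ⟨c, rfl⟩ | ⟨a, y, hy, rfl⟩ | ⟨y, z, c, hy, hz, hcase⟩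
    · exact Or.inl ⟨c, rfl⟩
    · have hymem : y ∈ W m := hinf'.sublist.subset (by simp)
      rcases mem_W hymem with h | h | h
      · omega
      · subst h; exact Or.inr (Or.inl ⟨a, rfl⟩)
      · subst h; exact Or.inr (Or.inr ⟨a, rfl⟩)
    · exfalso
      rcases hcase with h | h
      · exact no_pal_pair hy (h.trans hinf')
      · exact no_pal_triple hy hz (h.trans hinf')
  · rintro (⟨n, rfl⟩ | ⟨m', rfl⟩ | ⟨m', rfl⟩)
    · exact ⟨factor_ones n, by simp [one]⟩
    · exact ⟨factor_two m', pal_mid 2 m'⟩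
    · exact ⟨factor_three m', pal_mid 3 m'⟩

lemma count (n : ℕ) (hn : 1 ≤ n) :
    {u : List ℕ | u.length = n ∧ FactorW' u ∧ u.reverse = u}.ncard =
      if Even n then 1 else 3 := by
  by_cases he : Even n
  · rw [if_pos he]
    have hset : {u : List ℕ | u.length = n ∧ FactorW' u ∧ u.reverse = u} = {one n} := by
      ext u
      simp only [Set.mem_setOf_eq, Set.mem_singleton_iff]
      constructor
      · rintro ⟨hlen, hfac, hpal⟩
        rcases (main_iff u).1 ⟨hfac, hpal⟩ with ⟨c, rfl⟩ | ⟨m', rfl⟩ | ⟨m', rfl⟩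
        · simp only [one, List.length_replicate] at hlen ⊢; rw [hlen]
        · exfalso; obtain ⟨r, hr⟩ := he; simp [one] at hlen; omega
        · exfalso; obtain ⟨r, hr⟩ := he; simp [one] at hlen; omega
      · rintro rfl
        exact ⟨by simp [one], factor_ones n, by simp [one]⟩
    rw [hset, Set.ncard_singleton]
  · rw [if_neg he]
    obtain ⟨m, hm⟩ := Nat.not_even_iff_odd.mp he
    have hset : {u : List ℕ | u.length = n ∧ FactorW' u ∧ u.reverse = u}
        = {one n, one m ++ 2 :: one m, one m ++ 3 :: one m} := by
      ext u
      simp only [Set.mem_setOf_eq, Set.mem_insert_iff, Set.mem_singleton_iff]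
      constructor
      · rintro ⟨hlen, hfac, hpal⟩
        rcases (main_iff u).1 ⟨hfac, hpal⟩ with ⟨c, rfl⟩ | ⟨m', rfl⟩ | ⟨m', rfl⟩
        · left; simp only [one, List.length_replicate] at hlen ⊢; rw [hlen]
        · right; left
          simp only [one, List.length_append, List.length_cons, List.length_replicate] at hlen
          have : m' = m := by omega
          rw [this]
        · right; right
          simp only [one, List.length_append, List.length_cons, List.length_replicate] at hlen
          have : m' = m := by omega
          rw [this]
      · rintro (rfl | rfl | rfl)
        · exact ⟨by simp [one], factor_ones n, by simp [one]⟩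
        · exact ⟨by simp [one]; omega, factor_two m, pal_mid 2 m⟩
        · exact ⟨by simp [one]; omega, factor_three m, pal_mid 3 m⟩
    rw [hset]
    have hne1 : one n ∉ ({one m ++ 2 :: one m, one m ++ 3 :: one m} : Set (List ℕ)) := by
      simp only [Set.mem_insert_iff, Set.mem_singleton_iff]
      rintro (h | h)
      · have : (2 : ℕ) ∈ one n := by rw [h]; simp
        have := List.eq_of_mem_replicate this
        omega
      · have : (3 : ℕ) ∈ one n := by rw [h]; simp
        have := List.eq_of_mem_replicate this
        omega
    have hne2 : one m ++ 2 :: one m ≠ one m ++ 3 :: one m := by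
      intro h
      have := List.append_cancel_left h
      injection this with h1
      omega
    rw [Set.ncard_insert_of_notMem hne1 (Set.toFinite _), Set.ncard_pair hne2]


end CP

/-- The palindromic factors of w' are exactly the words 1ⁿ, 1^m 2 1^m and 1^m 3 1^m
(so the even-length ones are the 1ⁿ with n even, and the odd-length ones of length n are
1ⁿ, 1^((n−1)/2) 2 1^((n−1)/2) and 1^((n−1)/2) 3 1^((n−1)/2)); hence the palindrome
complexity of w' is 1 for even lengths and 3 for odd lengths. -/
theorem palindromes_of_w' :
    (∀ u : List ℕ, (FactorW' u ∧ u.reverse = u) ↔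
      ((∃ n, u = List.replicate n 1) ∨
        (∃ m, u = List.replicate m 1 ++ 2 :: List.replicate m 1) ∨
        (∃ m, u = List.replicate m 1 ++ 3 :: List.replicate m 1))) ∧
    ∀ n : ℕ, 1 ≤ n →
      {u : List ℕ | u.length = n ∧ FactorW' u ∧ u.reverse = u}.ncard =
        if Even n then 1 else 3 :=
  ⟨CP.main_iff, CP.count⟩
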